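/- Let μ be a product measure on ℝ^d and f_1, f_2, f_3, f_4 nonnegative measurable functions on ℝ^d satisfying f_1(x)·f_2(y) ≤ f_3(x ∨ y)·f_4(x ∧ y) for all x, y ∈ ℝ^d, where ∨ and ∧ denote coordinatewise maximum and minimum. Then (∫ f_1 dμ)(∫ f_2 dμ) ≤ (∫ f_3 dμ)(∫ f_4 dμ). -/

import Mathlib

open MeasureTheory
open scoped ENNReal

/-- Two-point Ahlswede–Daykin key lemma in `ℝ≥0∞`. -/
private lemma ad_key {u v u' v' p q p' q' : ℝ≥0∞}
    (h1 : u * v ≤ p * q) (h2 : u' * v' ≤ p * q)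
    (h3 : u * v' ≤ p' * q) (h4 : u' * v ≤ p * q') :
    u * v + u' * v' ≤ p * q + p' * q' := by
  by_cases ht0 : p * q = 0
  · have e1 : u * v = 0 := le_antisymm (ht0 ▸ h1) (zero_le)
    have e2 : u' * v' = 0 := le_antisymm (ht0 ▸ h2) (zero_le)
    simp [e1, e2]
  by_cases htop : p * q = ⊤
  · rw [htop]; simp
  obtain ⟨s, hs⟩ := le_iff_exists_add.mp h1
  obtain ⟨r, hr⟩ := le_iff_exists_add.mp h2
  have hab : (u * v) * (u' * v') ≤ (p * q) * (p' * q') := by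
    calc (u * v) * (u' * v') = (u * v') * (u' * v) := by ring
    _ ≤ (p' * q) * (p * q') := mul_le_mul' h3 h4
    _ = (p * q) * (p' * q') := by ring
  have key : (p * q) * (u * v + u' * v') ≤ (p * q) * ((p * q) + p' * q') := by
    calc (p * q) * (u * v + u' * v')
        = (p * q) * (u * v) + (p * q) * (u' * v') := mul_add _ _ _
    _ = (u' * v' + r) * (u * v) + (u * v + s) * (u' * v') := by
        nth_rewrite 1 [hr]; nth_rewrite 1 [hs]; rfl
    _ ≤ (u * v + s) * (u' * v' + r) + (u * v) * (u' * v') := by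
        have e : (u * v + s) * (u' * v' + r) + (u * v) * (u' * v') =
            ((u' * v' + r) * (u * v) + (u * v + s) * (u' * v')) + s * r := by ring
        rw [e]; exact le_self_add
    _ = (p * q) * (p * q) + (u * v) * (u' * v') := by rw [← hs, ← hr]
    _ ≤ (p * q) * (p * q) + (p * q) * (p' * q') := add_le_add_right hab _
    _ = (p * q) * ((p * q) + p' * q') := (mul_add _ _ _).symm
  exact (ENNReal.mul_le_mul_iff_right ht0 htop).mp key

/-- Pointwise symmetrized inequality on a linearly ordered domain. -/
private lemma ad_pointwise (f₁ f₂ f₃ f₄ : ℝ → ℝ≥0∞)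
    (h : ∀ x y, f₁ x * f₂ y ≤ f₃ (x ⊔ y) * f₄ (x ⊓ y)) (x y : ℝ) :
    f₁ x * f₂ y + f₁ y * f₂ x ≤ f₃ x * f₄ y + f₃ y * f₄ x := by
  rcases le_total x y with hxy | hxy
  · have H1 := h x y
    have H2 := h y x
    have H3 := h x x
    have H4 := h y y
    rw [sup_eq_right.2 hxy, inf_eq_left.2 hxy] at H1
    rw [sup_eq_left.2 hxy, inf_eq_right.2 hxy] at H2
    rw [sup_idem, inf_idem] at H3 H4
    exact (ad_key H1 H2 H3 H4).trans_eq (add_comm _ _)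
  · have H1 := h x y
    have H2 := h y x
    have H3 := h y y
    have H4 := h x x
    rw [sup_eq_left.2 hxy, inf_eq_right.2 hxy] at H1
    rw [sup_eq_right.2 hxy, inf_eq_left.2 hxy] at H2
    rw [sup_idem, inf_idem] at H3 H4
    exact (add_comm _ _).trans_le (ad_key H2 H1 H3 H4)

/-- One-dimensional Karlin–Rinott theorem. -/
private lemma ad_oneDim (μ : Measure ℝ) (f₁ f₂ f₃ f₄ : ℝ → ℝ≥0∞)
    (h₁ : Measurable f₁) (h₂ : Measurable f₂) (h₃ : Measurable f₃) (h₄ : Measurable f₄)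
    (h : ∀ x y, f₁ x * f₂ y ≤ f₃ (x ⊔ y) * f₄ (x ⊓ y)) :
    (∫⁻ x, f₁ x ∂μ) * (∫⁻ x, f₂ x ∂μ) ≤ (∫⁻ x, f₃ x ∂μ) * (∫⁻ x, f₄ x ∂μ) := by
  have doub : ∀ (g₁ g₂ : ℝ → ℝ≥0∞), Measurable g₁ → Measurable g₂ →
      ∫⁻ x, ∫⁻ y, (g₁ x * g₂ y + g₁ y * g₂ x) ∂μ ∂μ =
        2 * ((∫⁻ x, g₁ x ∂μ) * (∫⁻ x, g₂ x ∂μ)) := by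
    intro g₁ g₂ hg₁ hg₂
    have inner : ∀ x, ∫⁻ y, (g₁ x * g₂ y + g₁ y * g₂ x) ∂μ =
        g₁ x * (∫⁻ y, g₂ y ∂μ) + (∫⁻ y, g₁ y ∂μ) * g₂ x := by
      intro x
      rw [lintegral_add_left (hg₂.const_mul _), lintegral_const_mul _ hg₂,
        lintegral_mul_const _ hg₁]
    simp_rw [inner]
    rw [lintegral_add_left (hg₁.mul_const _), lintegral_mul_const _ hg₁,
      lintegral_const_mul _ hg₂]
    ring
  have mono : ∫⁻ x, ∫⁻ y, (f₁ x * f₂ y + f₁ y * f₂ x) ∂μ ∂μ ≤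
      ∫⁻ x, ∫⁻ y, (f₃ x * f₄ y + f₃ y * f₄ x) ∂μ ∂μ :=
    lintegral_mono fun x => lintegral_mono fun y => ad_pointwise f₁ f₂ f₃ f₄ h x y
  rw [doub f₁ f₂ h₁ h₂, doub f₃ f₄ h₃ h₄] at mono
  exact (ENNReal.mul_le_mul_iff_right two_ne_zero ENNReal.ofNat_ne_top).mp mono

private lemma cons_sup {n : ℕ} (a b : ℝ) (x y : Fin n → ℝ) :
    (Fin.cons a x ⊔ Fin.cons b y : Fin (n + 1) → ℝ) = Fin.cons (a ⊔ b) (x ⊔ y) := by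
  funext i
  refine Fin.cases ?_ (fun j => ?_) i <;> simp [Pi.sup_apply]

private lemma cons_inf {n : ℕ} (a b : ℝ) (x y : Fin n → ℝ) :
    (Fin.cons a x ⊓ Fin.cons b y : Fin (n + 1) → ℝ) = Fin.cons (a ⊓ b) (x ⊓ y) := by
  funext i
  refine Fin.cases ?_ (fun j => ?_) i <;> simp [Pi.inf_apply]

private lemma measurable_cons {n : ℕ} :
    Measurable fun p : ℝ × (Fin n → ℝ) => (Fin.cons p.1 p.2 : Fin (n + 1) → ℝ) := by
  rw [measurable_pi_iff]
  intro i
  refine Fin.cases ?_ (fun j => ?_) i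
  · simp only [Fin.cons_zero]; exact measurable_fst
  · simp only [Fin.cons_succ]; exact (measurable_pi_apply j).comp measurable_snd

/-- Karlin–Rinott, by induction on the dimension. -/
private lemma KR_aux : ∀ (d : ℕ) (μ : Fin d → Measure ℝ), (∀ i, SigmaFinite (μ i)) →
    ∀ (f₁ f₂ f₃ f₄ : (Fin d → ℝ) → ℝ≥0∞), Measurable f₁ → Measurable f₂ →
      Measurable f₃ → Measurable f₄ →
      (∀ x y, f₁ x * f₂ y ≤ f₃ (x ⊔ y) * f₄ (x ⊓ y)) →
      (∫⁻ x, f₁ x ∂Measure.pi μ) * (∫⁻ x, f₂ x ∂Measure.pi μ) ≤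
        (∫⁻ x, f₃ x ∂Measure.pi μ) * (∫⁻ x, f₄ x ∂Measure.pi μ) := by
  intro d
  induction d with
  | zero =>
    intro μ hσ f₁ f₂ f₃ f₄ h₁ h₂ h₃ h₄ h
    haveI := hσ
    have hconst : ∀ f : (Fin 0 → ℝ) → ℝ≥0∞, ∫⁻ x, f x ∂Measure.pi μ = f default := by
      intro f
      have : ∀ x : Fin 0 → ℝ, f x = f default := by
        intro x
        congr 1
        funext i
        exact i.elim0
      simp_rw [this]
      rw [lintegral_const]
      simp [Measure.pi_univ]
    rw [hconst f₁, hconst f₂, hconst f₃, hconst f₄]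
    have := h default default
    rwa [sup_idem, inf_idem] at this
  | succ n IH =>
    intro μ hσ f₁ f₂ f₃ f₄ h₁ h₂ h₃ h₄ h
    haveI := hσ
    set ν : Fin n → Measure ℝ := fun j => μ j.succ with hν
    haveI : ∀ j, SigmaFinite (ν j) := fun j => hσ _
    have dec : ∀ f : (Fin (n + 1) → ℝ) → ℝ≥0∞, Measurable f →
        ∫⁻ x, f x ∂Measure.pi μ =
          ∫⁻ t, ∫⁻ x, f (Fin.cons t x) ∂Measure.pi ν ∂(μ 0) := by
      intro f hf
      have hfun : (fun j : Fin n => μ ((0 : Fin (n + 1)).succAbove j)) = ν := by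
        funext j
        simp [hν, Fin.succAbove_zero]
      have MP := (measurePreserving_piFinSuccAbove μ 0).symm
        (MeasurableEquiv.piFinSuccAbove (fun _ : Fin (n + 1) => ℝ) 0)
      rw [hfun] at MP
      rw [← MP.lintegral_comp hf]
      have hm : Measurable fun z : ℝ × (Fin n → ℝ) =>
          f ((MeasurableEquiv.piFinSuccAbove (fun _ : Fin (n + 1) => ℝ) 0).symm z) :=
        hf.comp (MeasurableEquiv.measurable _)
      rw [lintegral_prod _ hm.aemeasurable]
      congr 1
      funext t
      congr 1
      funext x
      congr 1
      simp [MeasurableEquiv.piFinSuccAbove_symm_apply, Fin.insertNthEquiv, Fin.insertNth_zero]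
    have mcons : ∀ t : ℝ, Measurable fun x : Fin n → ℝ => (Fin.cons t x : Fin (n + 1) → ℝ) :=
      fun t => measurable_cons.comp measurable_prodMk_left
    have mg : ∀ f : (Fin (n + 1) → ℝ) → ℝ≥0∞, Measurable f →
        Measurable fun t => ∫⁻ x, f (Fin.cons t x) ∂Measure.pi ν := by
      intro f hf
      exact Measurable.lintegral_prod_right' (hf.comp measurable_cons)
    have hg : ∀ s t : ℝ,
        (∫⁻ x, f₁ (Fin.cons s x) ∂Measure.pi ν) * (∫⁻ x, f₂ (Fin.cons t x) ∂Measure.pi ν) ≤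
          (∫⁻ x, f₃ (Fin.cons (s ⊔ t) x) ∂Measure.pi ν) *
            (∫⁻ x, f₄ (Fin.cons (s ⊓ t) x) ∂Measure.pi ν) := by
      intro s t
      refine IH ν (fun j => hσ _) _ _ _ _ (h₁.comp (mcons s)) (h₂.comp (mcons t))
        (h₃.comp (mcons (s ⊔ t))) (h₄.comp (mcons (s ⊓ t))) ?_
      intro x y
      have := h (Fin.cons s x) (Fin.cons t y)
      rwa [cons_sup, cons_inf] at this
    rw [dec f₁ h₁, dec f₂ h₂, dec f₃ h₃, dec f₄ h₄]
    exact ad_oneDim (μ 0) _ _ _ _ (mg f₁ h₁) (mg f₂ h₂) (mg f₃ h₃) (mg f₄ h₄) hg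

/-- Karlin–Rinott theorem (continuous four-functions / Ahlswede–Daykin theorem):
for a product measure `μ` on `ℝ^d` and nonnegative measurable functions `f₁, f₂, f₃, f₄`
with `f₁(x)·f₂(y) ≤ f₃(x ∨ y)·f₄(x ∧ y)`, one has `∫f₁ ∫f₂ ≤ ∫f₃ ∫f₄`. -/
theorem stmt7 (d : ℕ) (μ : Fin d → Measure ℝ) [∀ i, SigmaFinite (μ i)]
    (f₁ f₂ f₃ f₄ : (Fin d → ℝ) → ℝ≥0∞)
    (h₁ : Measurable f₁) (h₂ : Measurable f₂) (h₃ : Measurable f₃) (h₄ : Measurable f₄)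
    (h : ∀ x y, f₁ x * f₂ y ≤ f₃ (x ⊔ y) * f₄ (x ⊓ y)) :
    (∫⁻ x, f₁ x ∂Measure.pi μ) * (∫⁻ x, f₂ x ∂Measure.pi μ) ≤
      (∫⁻ x, f₃ x ∂Measure.pi μ) * (∫⁻ x, f₄ x ∂Measure.pi μ) := by
  exact KR_aux d μ (fun i => inferInstance) f₁ f₂ f₃ f₄ h₁ h₂ h₃ h₄ h
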